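/- Let d ≥ 6, let k ≥ 1 be a real number, and let m be a positive integer with m ≤ d^k. Let μ be the uniform (rotation-invariant) probability measure on the unit sphere S^{d−1} ⊆ ℝ^d and let μ^m be its m-fold product measure on (S^{d−1})^m. Then μ^m of the event { (x_1, …, x_m) : there exist i ≠ j with |⟨x_i, x_j⟩| > ln(d)/√d } is at most d^{2k+1−ln(d)/4}; equivalently, with probability at least 1 − d^{2k+1−ln(d)/4}, independent uniform x_1, …, x_m on S^{d−1} satisfy |⟨x_i, x_j⟩| ≤ ln(d)/√d for all i ≠ j. -/

import Mathlib

open InnerProductSpace MeasureTheory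

open MeasureTheory Real
open scoped ENNReal
set_option maxHeartbeats 1000000


noncomputable section

variable {d : ℕ}

/-- rotation by θ in the (i0,i1) coordinate plane -/
def rotFun (i0 i1 : Fin d) (θ : ℝ) (x : EuclideanSpace ℝ (Fin d)) : EuclideanSpace ℝ (Fin d) :=
  WithLp.toLp 2 fun i => if i = i0 then Real.cos θ * x i0 - Real.sin θ * x i1
    else if i = i1 then Real.sin θ * x i0 + Real.cos θ * x i1 else x i

lemma rotFun_apply0 (i0 i1 : Fin d) (θ : ℝ) (x : EuclideanSpace ℝ (Fin d)) :
    rotFun i0 i1 θ x i0 = Real.cos θ * x i0 - Real.sin θ * x i1 := by simp [rotFun]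

lemma rotFun_apply1 (i0 i1 : Fin d) (h : i0 ≠ i1) (θ : ℝ) (x : EuclideanSpace ℝ (Fin d)) :
    rotFun i0 i1 θ x i1 = Real.sin θ * x i0 + Real.cos θ * x i1 := by
  simp [rotFun, h.symm]

lemma rotFun_apply2 (i0 i1 : Fin d) (θ : ℝ) (x : EuclideanSpace ℝ (Fin d)) {i : Fin d}
    (h0 : i ≠ i0) (h1 : i ≠ i1) : rotFun i0 i1 θ x i = x i := by simp [rotFun, h0, h1]

lemma sum_split (i0 i1 : Fin d) (h : i0 ≠ i1) (g : Fin d → ℝ) :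
    ∑ i, g i = g i0 + g i1 + ∑ i ∈ Finset.univ \ {i0, i1}, g i := by
  rw [← Finset.sum_sdiff (Finset.subset_univ {i0, i1}), Finset.sum_pair h]; ring

def rotEquiv (i0 i1 : Fin d) (h : i0 ≠ i1) (θ : ℝ) :
    EuclideanSpace ℝ (Fin d) ≃ₗ[ℝ] EuclideanSpace ℝ (Fin d) where
  toFun := rotFun i0 i1 θ
  invFun := rotFun i0 i1 (-θ)
  map_add' x y := by
    ext i
    rcases eq_or_ne i i0 with rfl | h0
    · simp only [rotFun_apply0, PiLp.add_apply]; ring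
    rcases eq_or_ne i i1 with rfl | h1
    · simp only [rotFun_apply1 _ _ h, PiLp.add_apply]; ring
    · simp only [rotFun_apply2 _ _ _ _ h0 h1, PiLp.add_apply]
  map_smul' c x := by
    ext i
    rcases eq_or_ne i i0 with rfl | h0
    · simp only [rotFun_apply0, PiLp.smul_apply, smul_eq_mul, RingHom.id_apply]; ring
    rcases eq_or_ne i i1 with rfl | h1
    · simp only [rotFun_apply1 _ _ h, PiLp.smul_apply, smul_eq_mul, RingHom.id_apply]; ring
    · simp only [rotFun_apply2 _ _ _ _ h0 h1, PiLp.smul_apply, RingHom.id_apply]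
  left_inv x := by
    show rotFun i0 i1 (-θ) (rotFun i0 i1 θ x) = x
    ext i
    rcases eq_or_ne i i0 with rfl | h0
    · rw [rotFun_apply0, rotFun_apply0, rotFun_apply1 _ _ h]
      simp only [Real.cos_neg, Real.sin_neg]
      linear_combination x i * Real.sin_sq_add_cos_sq θ
    rcases eq_or_ne i i1 with rfl | h1
    · rw [rotFun_apply1 _ _ h, rotFun_apply0, rotFun_apply1 _ _ h]
      simp only [Real.cos_neg, Real.sin_neg]
      linear_combination x i * Real.sin_sq_add_cos_sq θ
    · rw [rotFun_apply2 _ _ _ _ h0 h1, rotFun_apply2 _ _ _ _ h0 h1]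
  right_inv x := by
    show rotFun i0 i1 θ (rotFun i0 i1 (-θ) x) = x
    ext i
    rcases eq_or_ne i i0 with rfl | h0
    · rw [rotFun_apply0, rotFun_apply0, rotFun_apply1 _ _ h]
      simp only [Real.cos_neg, Real.sin_neg]
      linear_combination x i * Real.sin_sq_add_cos_sq θ
    rcases eq_or_ne i i1 with rfl | h1
    · rw [rotFun_apply1 _ _ h, rotFun_apply0, rotFun_apply1 _ _ h]
      simp only [Real.cos_neg, Real.sin_neg]
      linear_combination x i * Real.sin_sq_add_cos_sq θ
    · rw [rotFun_apply2 _ _ _ _ h0 h1, rotFun_apply2 _ _ _ _ h0 h1]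

def rotIso (i0 i1 : Fin d) (h : i0 ≠ i1) (θ : ℝ) :
    EuclideanSpace ℝ (Fin d) ≃ₗᵢ[ℝ] EuclideanSpace ℝ (Fin d) where
  toLinearEquiv := rotEquiv i0 i1 h θ
  norm_map' x := by
    have he : ∀ y : EuclideanSpace ℝ (Fin d), ‖y‖ = Real.sqrt (∑ i, y i ^ 2) := by
      intro y; rw [EuclideanSpace.norm_eq]; simp [sq_abs]
    rw [he, he]
    congr 1
    show ∑ i, rotFun i0 i1 θ x i ^ 2 = ∑ i, x i ^ 2
    rw [sum_split i0 i1 h, sum_split i0 i1 h (fun i => x i ^ 2)]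
    have h2 : ∑ i ∈ Finset.univ \ {i0, i1}, rotFun i0 i1 θ x i ^ 2
        = ∑ i ∈ Finset.univ \ {i0, i1}, x i ^ 2 := by
      refine Finset.sum_congr rfl fun i hi => ?_
      simp only [Finset.mem_sdiff, Finset.mem_insert, Finset.mem_singleton, not_or] at hi
      rw [rotFun_apply2 _ _ _ _ hi.2.1 hi.2.2]
    rw [h2, rotFun_apply0, rotFun_apply1 _ _ h]
    have := Real.sin_sq_add_cos_sq θ
    nlinarith [this]

lemma rotIso_apply0 (i0 i1 : Fin d) (h : i0 ≠ i1) (θ : ℝ) (x : EuclideanSpace ℝ (Fin d)) :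
    rotIso i0 i1 h θ x i0 = Real.cos θ * x i0 - Real.sin θ * x i1 := rotFun_apply0 _ _ _ _

lemma rotIso_apply1 (i0 i1 : Fin d) (h : i0 ≠ i1) (θ : ℝ) (x : EuclideanSpace ℝ (Fin d)) :
    rotIso i0 i1 h θ x i1 = Real.sin θ * x i0 + Real.cos θ * x i1 := rotFun_apply1 _ _ h _ _

end

noncomputable section
variable {d : ℕ} {μ : Measure (EuclideanSpace ℝ (Fin d))} [IsProbabilityMeasure μ]

lemma integral_comp_iso
    (hrot : ∀ R : EuclideanSpace ℝ (Fin d) ≃ₗᵢ[ℝ] EuclideanSpace ℝ (Fin d),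
      Measure.map R μ = μ)
    (R : EuclideanSpace ℝ (Fin d) ≃ₗᵢ[ℝ] EuclideanSpace ℝ (Fin d))
    (f : EuclideanSpace ℝ (Fin d) → ℝ) (hf : AEStronglyMeasurable f μ) :
    ∫ x, f (R x) ∂μ = ∫ x, f x ∂μ := by
  conv_rhs => rw [← hrot R]
  rw [integral_map R.continuous.aemeasurable (by rwa [hrot])]

lemma ae_sphere (hsphere : μ (Metric.sphere (0 : EuclideanSpace ℝ (Fin d)) 1) = 1) :
    ∀ᵐ x ∂μ, ‖x‖ = 1 := by
  have h1 : μ (Metric.sphere (0 : EuclideanSpace ℝ (Fin d)) 1)ᶜ = 0 := by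
    rw [measure_compl (Metric.isClosed_sphere.measurableSet) (measure_ne_top μ _), hsphere,
      measure_univ, tsub_self]
  refine measure_mono_null (fun x hx => ?_) h1
  simp only [Set.mem_compl_iff, Metric.mem_sphere, Set.mem_setOf_eq] at *
  rw [dist_zero_right]; exact hx

lemma sum_sq_eq_one {x : EuclideanSpace ℝ (Fin d)} (hx : ‖x‖ = 1) :
    ∑ i, x i ^ 2 = 1 := by
  have : ‖x‖ = Real.sqrt (∑ i, x i ^ 2) := by rw [EuclideanSpace.norm_eq]; simp [sq_abs]
  rw [hx] at this
  have h2 : Real.sqrt (∑ i, x i ^ 2) ^ 2 = ∑ i, x i ^ 2 :=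
    Real.sq_sqrt (Finset.sum_nonneg fun i _ => sq_nonneg (x i))
  rw [← this] at h2; simpa using h2.symm

lemma sq_add_sq_le_one {x : EuclideanSpace ℝ (Fin d)} (hx : ‖x‖ = 1) (i0 i1 : Fin d)
    (h : i0 ≠ i1) : x i0 ^ 2 + x i1 ^ 2 ≤ 1 := by
  rw [← sum_sq_eq_one hx]
  have : x i0 ^ 2 + x i1 ^ 2 = ∑ i ∈ ({i0, i1} : Finset (Fin d)), x i ^ 2 :=
    (Finset.sum_pair (f := fun i => x i ^ 2) h).symm
  rw [this]
  exact Finset.sum_le_sum_of_subset_of_nonneg (Finset.subset_univ _)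
    (fun i _ _ => sq_nonneg _)

lemma integrable_of_sphere_bound (hsphere : μ (Metric.sphere (0 : EuclideanSpace ℝ (Fin d)) 1) = 1)
    {f : EuclideanSpace ℝ (Fin d) → ℝ} (hf : AEStronglyMeasurable f μ) (C : ℝ)
    (hb : ∀ x, ‖x‖ = 1 → |f x| ≤ C) : Integrable f μ := by
  refine Integrable.mono' (integrable_const C) hf ?_
  filter_upwards [ae_sphere hsphere] with x hx
  simpa using hb x hx
end

noncomputable section

lemma circle_int (q : ℕ) (a b : ℝ) :
    ∫ θ in (0:ℝ)..(2*π),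
      ((a*Real.cos θ - b*Real.sin θ)^(2*q+2)
        - (2*q+1:ℝ) * (a*Real.cos θ - b*Real.sin θ)^(2*q) * (a*Real.sin θ + b*Real.cos θ)^2)
      = 0 := by
  set u : ℝ → ℝ := fun θ => a*Real.cos θ - b*Real.sin θ with hu_def
  set v : ℝ → ℝ := fun θ => a*Real.sin θ + b*Real.cos θ with hv_def
  have hG : ∀ θ : ℝ, HasDerivAt (fun t => u t ^ (2*q+1) * v t)
      (u θ^(2*q+2) - (2*q+1:ℝ) * u θ^(2*q) * v θ^2) θ := by
    intro θ
    have hu : HasDerivAt u (-(v θ)) θ := by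
      have := ((Real.hasDerivAt_cos θ).const_mul a).sub ((Real.hasDerivAt_sin θ).const_mul b)
      refine this.congr_deriv ?_
      simp only [hv_def]; ring
    have hv : HasDerivAt v (u θ) θ := by
      have := ((Real.hasDerivAt_sin θ).const_mul a).add ((Real.hasDerivAt_cos θ).const_mul b)
      refine this.congr_deriv ?_
      simp only [hu_def]; ring
    have := (hu.pow (2*q+1)).mul hv
    refine this.congr_deriv ?_
    simp only [Pi.pow_apply, Nat.add_sub_cancel]
    push_cast
    ring
  have hcont : Continuous (fun θ => u θ^(2*q+2) - (2*q+1:ℝ) * u θ^(2*q) * v θ^2) := by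
    fun_prop
  rw [intervalIntegral.integral_eq_sub_of_hasDerivAt (fun θ _ => hG θ)
    (hcont.intervalIntegrable _ _)]
  simp [hu_def, hv_def]

end
section
variable {d : ℕ} {μ : Measure (EuclideanSpace ℝ (Fin d))} [IsProbabilityMeasure μ]

lemma moment_eq
    (hsphere : μ (Metric.sphere (0 : EuclideanSpace ℝ (Fin d)) 1) = 1)
    (hrot : ∀ R : EuclideanSpace ℝ (Fin d) ≃ₗᵢ[ℝ] EuclideanSpace ℝ (Fin d),
      Measure.map R μ = μ)
    (i0 i1 : Fin d) (hi : i0 ≠ i1) (q : ℕ) :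
    ∫ x, (x i0)^(2*q+2) ∂μ = (2*q+1:ℝ) * ∫ x, (x i0)^(2*q) * (x i1)^2 ∂μ := by
  have hc0 : Continuous fun x : EuclideanSpace ℝ (Fin d) => x i0 := PiLp.continuous_apply 2 _ _
  have hc1 : Continuous fun x : EuclideanSpace ℝ (Fin d) => x i1 := PiLp.continuous_apply 2 _ _
  set f : EuclideanSpace ℝ (Fin d) → ℝ := fun x => (x i0)^(2*q+2) with hf_def
  set g : EuclideanSpace ℝ (Fin d) → ℝ := fun x => (x i0)^(2*q) * (x i1)^2 with hg_def
  have hfc : Continuous f := by fun_prop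
  have hgc : Continuous g := by fun_prop
  have habs : ∀ y : EuclideanSpace ℝ (Fin d), ‖y‖ = 1 → |y i0| ≤ 1 ∧ |y i1| ≤ 1 := by
    intro y hy
    have h2 := sq_add_sq_le_one hy i0 i1 hi
    constructor <;>
      nlinarith [sq_abs (y i0), sq_abs (y i1), abs_nonneg (y i0), abs_nonneg (y i1),
        sq_nonneg (y i0), sq_nonneg (y i1)]
  have hfb : ∀ y : EuclideanSpace ℝ (Fin d), ‖y‖ = 1 → |f y| ≤ 1 := by
    intro y hy
    rw [hf_def]
    simp only [abs_pow]
    exact pow_le_one₀ (abs_nonneg _) (habs y hy).1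
  have hgb : ∀ y : EuclideanSpace ℝ (Fin d), ‖y‖ = 1 → |g y| ≤ 1 := by
    intro y hy
    rw [hg_def]
    simp only [abs_mul, abs_pow]
    exact mul_le_one₀ (pow_le_one₀ (abs_nonneg _) (habs y hy).1) (by positivity)
      (pow_le_one₀ (abs_nonneg _) (habs y hy).2)
  have hintf : Integrable f μ := integrable_of_sphere_bound hsphere hfc.aestronglyMeasurable 1 hfb
  have hintg : Integrable g μ := integrable_of_sphere_bound hsphere hgc.aestronglyMeasurable 1 hgb
  set ν := volume.restrict (Set.Ioc (0:ℝ) (2*π)) with hν_def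
  haveI hνfin : IsFiniteMeasure ν :=
    ⟨by rw [hν_def, Measure.restrict_apply_univ]; exact measure_Ioc_lt_top⟩
  set H : ℝ → EuclideanSpace ℝ (Fin d) → ℝ := fun θ x =>
    f (rotIso i0 i1 hi θ x) - (2*q+1:ℝ) * g (rotIso i0 i1 hi θ x) with hH_def
  have hHcoord : ∀ (θ : ℝ) (x : EuclideanSpace ℝ (Fin d)), H θ x =
      (x i0 * Real.cos θ - x i1 * Real.sin θ)^(2*q+2)
      - (2*q+1:ℝ) * (x i0 * Real.cos θ - x i1 * Real.sin θ)^(2*q)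
        * (x i0 * Real.sin θ + x i1 * Real.cos θ)^2 := by
    intro θ x
    rw [hH_def]
    simp only [hf_def, hg_def, rotIso_apply0, rotIso_apply1]
    ring
  have hHc : Continuous (Function.uncurry H) := by
    have : Function.uncurry H = fun z : ℝ × EuclideanSpace ℝ (Fin d) =>
        (z.2 i0 * Real.cos z.1 - z.2 i1 * Real.sin z.1)^(2*q+2)
        - (2*q+1:ℝ) * (z.2 i0 * Real.cos z.1 - z.2 i1 * Real.sin z.1)^(2*q)
          * (z.2 i0 * Real.sin z.1 + z.2 i1 * Real.cos z.1)^2 := by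
      funext z; exact hHcoord z.1 z.2
    rw [this]
    have h0 : Continuous fun z : ℝ × EuclideanSpace ℝ (Fin d) => z.2 i0 :=
      hc0.comp continuous_snd
    have h1 : Continuous fun z : ℝ × EuclideanSpace ℝ (Fin d) => z.2 i1 :=
      hc1.comp continuous_snd
    fun_prop
  have hIH : Integrable (Function.uncurry H) (ν.prod μ) := by
    refine Integrable.mono' (integrable_const (2*(q:ℝ)+2)) hHc.aestronglyMeasurable ?_
    have hae : ∀ᵐ z ∂(ν.prod μ), ‖z.2‖ = 1 := by
      rw [ae_iff]
      refine measure_mono_null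
        (fun z hz => (Set.mem_prod.2 ⟨Set.mem_univ _, hz⟩ :
          z ∈ (Set.univ : Set ℝ) ×ˢ {x : EuclideanSpace ℝ (Fin d) | ¬ ‖x‖ = 1})) ?_
      rw [Measure.prod_prod]
      have hμ0 : μ {x : EuclideanSpace ℝ (Fin d) | ¬ ‖x‖ = 1} = 0 := by
        have := ae_sphere hsphere
        rwa [ae_iff] at this
      rw [hμ0, mul_zero]
    filter_upwards [hae] with z hz
    have hn : ‖rotIso i0 i1 hi z.1 z.2‖ = 1 := by
      rw [LinearIsometryEquiv.norm_map]; exact hz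
    have h1 := hfb _ hn
    have h2 := hgb _ hn
    simp only [Function.uncurry, hH_def]
    have : |f (rotIso i0 i1 hi z.1 z.2) - (2*q+1:ℝ) * g (rotIso i0 i1 hi z.1 z.2)|
        ≤ 1 + (2*q+1:ℝ) * 1 := by
      refine (abs_sub _ _).trans ?_
      gcongr
      rw [abs_mul]
      have : |(2*q+1:ℝ)| = (2*q+1:ℝ) := abs_of_nonneg (by positivity)
      rw [this]
      nlinarith [abs_nonneg (g (rotIso i0 i1 hi z.1 z.2))]
    calc ‖f (rotIso i0 i1 hi z.1 z.2) - (2*q+1:ℝ) * g (rotIso i0 i1 hi z.1 z.2)‖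
        = |f (rotIso i0 i1 hi z.1 z.2) - (2*q+1:ℝ) * g (rotIso i0 i1 hi z.1 z.2)| := rfl
      _ ≤ 1 + (2*q+1:ℝ) * 1 := this
      _ ≤ 2*(q:ℝ)+2 := by ring_nf; norm_num
  have hinner : ∀ θ : ℝ, ∫ x, H θ x ∂μ
      = (∫ x, f x ∂μ) - (2*q+1:ℝ) * ∫ x, g x ∂μ := by
    intro θ
    have hRc := (rotIso i0 i1 hi θ).continuous
    have h1 : Integrable (fun x => f (rotIso i0 i1 hi θ x)) μ :=
      integrable_of_sphere_bound hsphere (hfc.comp hRc).aestronglyMeasurable 1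
        (fun x hx => hfb _ (by rw [LinearIsometryEquiv.norm_map]; exact hx))
    have h2 : Integrable (fun x => g (rotIso i0 i1 hi θ x)) μ :=
      integrable_of_sphere_bound hsphere (hgc.comp hRc).aestronglyMeasurable 1
        (fun x hx => hgb _ (by rw [LinearIsometryEquiv.norm_map]; exact hx))
    rw [hH_def]
    simp only
    rw [integral_sub h1 (h2.const_mul _), integral_const_mul,
      integral_comp_iso hrot _ f hfc.aestronglyMeasurable,
      integral_comp_iso hrot _ g hgc.aestronglyMeasurable]
  have hzero : ∀ x : EuclideanSpace ℝ (Fin d), ∫ θ, H θ x ∂ν = 0 := by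
    intro x
    have h1 : ∫ θ, H θ x ∂ν = ∫ θ in (0:ℝ)..(2*π), H θ x := by
      rw [intervalIntegral.integral_of_le (by positivity)]
    rw [h1]
    have h2 : ∫ θ in (0:ℝ)..(2*π), H θ x = ∫ θ in (0:ℝ)..(2*π),
        ((x i0)*Real.cos θ - (x i1)*Real.sin θ)^(2*q+2)
          - (2*q+1:ℝ) * ((x i0)*Real.cos θ - (x i1)*Real.sin θ)^(2*q)
            * ((x i0)*Real.sin θ + (x i1)*Real.cos θ)^2 :=
      intervalIntegral.integral_congr fun θ _ => hHcoord θ x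
    rw [h2]
    exact circle_int q (x i0) (x i1)
  have hswap := integral_integral_swap (f := H) (μ := ν) (ν := μ) hIH
  have hconst : ∫ θ, (∫ x, H θ x ∂μ) ∂ν
      = (2*π) * ((∫ x, f x ∂μ) - (2*q+1:ℝ) * ∫ x, g x ∂μ) := by
    rw [integral_congr_ae (ae_of_all _ fun θ => hinner θ), integral_const]
    rw [hν_def, measureReal_restrict_apply_univ, measureReal_def, Real.volume_Ioc]
    rw [smul_eq_mul, ENNReal.toReal_ofReal (by nlinarith [Real.pi_pos])]
    ring
  have hz2 : ∫ x, (∫ θ, H θ x ∂ν) ∂μ = 0 := by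
    rw [integral_congr_ae (ae_of_all _ fun x => hzero x)]
    simp
  rw [hswap, hz2] at hconst
  have hpi : (2*π) ≠ 0 := ne_of_gt (by positivity)
  have := (mul_eq_zero.1 hconst.symm).resolve_left hpi
  linarith
end
section
variable {d : ℕ} {μ : Measure (EuclideanSpace ℝ (Fin d))} [IsProbabilityMeasure μ]

lemma coord_abs_le_one {x : EuclideanSpace ℝ (Fin d)} (hx : ‖x‖ = 1) (j : Fin d) :
    |x j| ≤ 1 := by
  have h1 : x j ^ 2 ≤ 1 := by
    rw [← sum_sq_eq_one hx]
    exact Finset.single_le_sum (fun i _ => sq_nonneg (x i)) (Finset.mem_univ j)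
  nlinarith [sq_abs (x j), abs_nonneg (x j)]

lemma integral_swap_coord
    (hrot : ∀ R : EuclideanSpace ℝ (Fin d) ≃ₗᵢ[ℝ] EuclideanSpace ℝ (Fin d),
      Measure.map R μ = μ)
    (i0 i1 j : Fin d) (hi : i0 ≠ i1) (hj : j ≠ i0) (q : ℕ) :
    ∫ x, (x i0)^(2*q) * (x j)^2 ∂μ = ∫ x, (x i0)^(2*q) * (x i1)^2 ∂μ := by
  by_cases hji : j = i1
  · rw [hji]
  set S := LinearIsometryEquiv.piLpCongrLeft 2 ℝ ℝ (Equiv.swap i1 j) with hS_def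
  have happ : ∀ (x : EuclideanSpace ℝ (Fin d)) (k : Fin d), S x k = x (Equiv.swap i1 j k) := by
    intro x k
    rw [hS_def, LinearIsometryEquiv.piLpCongrLeft_apply, Equiv.piCongrLeft'_apply,
      Equiv.symm_swap]
  have hcont : Continuous (fun y : EuclideanSpace ℝ (Fin d) => (y i0)^(2*q) * (y j)^2) :=
    (((PiLp.continuous_apply 2 _ i0).pow _).mul ((PiLp.continuous_apply 2 _ j).pow 2))
  have hinv := integral_comp_iso hrot S (fun y => (y i0)^(2*q) * (y j)^2)
    hcont.aestronglyMeasurable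
  have hsub : ∀ x : EuclideanSpace ℝ (Fin d),
      ((S x) i0)^(2*q) * ((S x) j)^2 = (x i0)^(2*q) * (x i1)^2 := by
    intro x
    rw [happ, happ, Equiv.swap_apply_of_ne_of_ne hi (Ne.symm hj), Equiv.swap_apply_right]
  have hinv' : ∫ x, ((S x) i0)^(2*q) * ((S x) j)^2 ∂μ = ∫ x, (x i0)^(2*q) * (x j)^2 ∂μ := by
    simpa using hinv
  have h2 : ∫ x, ((S x) i0)^(2*q) * ((S x) j)^2 ∂μ = ∫ x, (x i0)^(2*q) * (x i1)^2 ∂μ :=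
    integral_congr_ae (ae_of_all _ fun x => hsub x)
  exact hinv'.symm.trans h2

lemma moment_rec
    (hsphere : μ (Metric.sphere (0 : EuclideanSpace ℝ (Fin d)) 1) = 1)
    (hrot : ∀ R : EuclideanSpace ℝ (Fin d) ≃ₗᵢ[ℝ] EuclideanSpace ℝ (Fin d),
      Measure.map R μ = μ)
    (i0 i1 : Fin d) (hi : i0 ≠ i1) (q : ℕ) :
    (2*q+1:ℝ) * ∫ x, (x i0)^(2*q) ∂μ = ((d:ℝ) + 2*q) * ∫ x, (x i0)^(2*q+2) ∂μ := by
  have hint : ∀ j : Fin d, Integrable (fun x => (x i0)^(2*q) * (x j)^2) μ := by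
    intro j
    refine integrable_of_sphere_bound hsphere
      ((((PiLp.continuous_apply 2 _ i0).pow _).mul ((PiLp.continuous_apply 2 _ j).pow 2)).aestronglyMeasurable)
      1 (fun x hx => ?_)
    rw [abs_mul, abs_pow, abs_pow]
    exact mul_le_one₀ (pow_le_one₀ (abs_nonneg _) (coord_abs_le_one hx i0)) (by positivity)
      (pow_le_one₀ (abs_nonneg _) (coord_abs_le_one hx j))
  have hsum : ∫ x, (x i0)^(2*q) ∂μ = ∑ j : Fin d, ∫ x, (x i0)^(2*q) * (x j)^2 ∂μ := by
    rw [← integral_finset_sum _ (fun j _ => hint j)]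
    refine integral_congr_ae ?_
    filter_upwards [ae_sphere hsphere] with x hx
    rw [← Finset.mul_sum, sum_sq_eq_one hx, mul_one]
  have hsplit : ∑ j : Fin d, ∫ x, (x i0)^(2*q) * (x j)^2 ∂μ
      = (∫ x, (x i0)^(2*q+2) ∂μ) + ((d:ℝ) - 1) * ∫ x, (x i0)^(2*q) * (x i1)^2 ∂μ := by
    rw [← Finset.add_sum_erase _ _ (Finset.mem_univ i0)]
    congr 1
    · refine integral_congr_ae (ae_of_all _ fun x => ?_)
      ring
    · have hterm : ∀ j ∈ Finset.univ.erase i0,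
          ∫ x, (x i0)^(2*q) * (x j)^2 ∂μ = ∫ x, (x i0)^(2*q) * (x i1)^2 ∂μ :=
        fun j hj => integral_swap_coord hrot i0 i1 j hi (Finset.mem_erase.1 hj).1 q
      rw [Finset.sum_congr rfl hterm, Finset.sum_const, Finset.card_erase_of_mem
        (Finset.mem_univ i0), Finset.card_univ, Fintype.card_fin, nsmul_eq_mul]
      congr 1
      have hd1 : 1 ≤ d := i0.pos
      push_cast [Nat.cast_sub hd1]
      ring
  have e1 : ∫ x, (x i0)^(2*q) ∂μ = (∫ x, (x i0)^(2*q+2) ∂μ)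
      + ((d:ℝ) - 1) * ∫ x, (x i0)^(2*q) * (x i1)^2 ∂μ := hsum.trans hsplit
  have e2 := moment_eq hsphere hrot i0 i1 hi q
  linear_combination (2*(q:ℝ)+1) * e1 - ((d:ℝ)-1) * e2

lemma moment_le
    (hsphere : μ (Metric.sphere (0 : EuclideanSpace ℝ (Fin d)) 1) = 1)
    (hrot : ∀ R : EuclideanSpace ℝ (Fin d) ≃ₗᵢ[ℝ] EuclideanSpace ℝ (Fin d),
      Measure.map R μ = μ)
    (i0 i1 : Fin d) (hi : i0 ≠ i1) (p : ℕ) :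
    (∫ x, (x i0)^(2*p) ∂μ) * (d:ℝ)^p ≤ ∏ i ∈ Finset.range p, (2*i+1:ℝ) := by
  induction p with
  | zero => simp
  | succ n ih =>
    have hrec := moment_rec hsphere hrot i0 i1 hi n
    have hnn : ∀ m : ℕ, 0 ≤ ∫ x, (x i0)^(2*m) ∂μ := by
      intro m
      refine integral_nonneg fun x => ?_
      rw [pow_mul]
      positivity
    have hmono : (∫ x, (x i0)^(2*(n+1)) ∂μ) * (d:ℝ)^(n+1)
        ≤ (2*n+1:ℝ) * ((∫ x, (x i0)^(2*n) ∂μ) * (d:ℝ)^n) := by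
      have he : 2*(n+1) = 2*n+2 := by omega
      rw [he]
      have hdle : (d:ℝ) ≤ (d:ℝ) + 2*n := le_add_of_nonneg_right (by positivity)
      calc (∫ x, (x i0)^(2*n+2) ∂μ) * (d:ℝ)^(n+1)
          = ((∫ x, (x i0)^(2*n+2) ∂μ) * (d:ℝ)) * (d:ℝ)^n := by ring
        _ ≤ ((∫ x, (x i0)^(2*n+2) ∂μ) * ((d:ℝ) + 2*n)) * (d:ℝ)^n := by
            have := hnn (n+1)
            rw [show 2*(n+1) = 2*n+2 by omega] at this
            gcongr
        _ = (((d:ℝ) + 2*n) * ∫ x, (x i0)^(2*n+2) ∂μ) * (d:ℝ)^n := by ring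
        _ = ((2*n+1:ℝ) * ∫ x, (x i0)^(2*n) ∂μ) * (d:ℝ)^n := by rw [← hrec]
        _ = (2*n+1:ℝ) * ((∫ x, (x i0)^(2*n) ∂μ) * (d:ℝ)^n) := by ring
    refine hmono.trans ?_
    rw [Finset.prod_range_succ]
    calc (2*n+1:ℝ) * ((∫ x, (x i0)^(2*n) ∂μ) * (d:ℝ)^n)
        ≤ (2*n+1:ℝ) * ∏ i ∈ Finset.range n, (2*i+1:ℝ) := by
          apply mul_le_mul_of_nonneg_left ih (by positivity)
      _ = (∏ i ∈ Finset.range n, (2*i+1:ℝ)) * (2*n+1:ℝ) := by ring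
end

lemma two_mul_pow_le (p : ℕ) (hp : 1 ≤ p) : 2 * (p:ℝ)^p ≤ ((p:ℝ)+1)^p := by
  have hp0 : (0:ℝ) < p := by exact_mod_cast hp
  have h := one_add_mul_le_pow (a := 1/(p:ℝ))
    ((by norm_num : (-2:ℝ) ≤ 0).trans (by positivity)) p
  have h2 : (1:ℝ) + p * (1/p) = 2 := by
    rw [mul_one_div, div_self (ne_of_gt hp0)]; norm_num
  rw [h2] at h
  calc 2 * (p:ℝ)^p ≤ (1+1/p)^p * p^p := mul_le_mul_of_nonneg_right h (by positivity)
    _ = ((1+1/(p:ℝ))*p)^p := (mul_pow _ _ _).symm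
    _ = ((p:ℝ)+1)^p := by
        congr 1
        field_simp

lemma prod_odd_le (p : ℕ) (hp : 1 ≤ p) :
    ∏ i ∈ Finset.range p, (2*i+1:ℝ) ≤ 2 * (p:ℝ)^p := by
  induction p, hp using Nat.le_induction with
  | base => simp
  | succ n hn ih =>
    rw [Finset.prod_range_succ]
    have hb := two_mul_pow_le n hn
    have hprodnn : (0:ℝ) ≤ ∏ i ∈ Finset.range n, (2*i+1:ℝ) :=
      Finset.prod_nonneg fun i _ => by positivity
    calc (∏ i ∈ Finset.range n, (2*i+1:ℝ)) * (2*n+1:ℝ)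
        ≤ (2 * (n:ℝ)^n) * (2*n+2:ℝ) := by
          apply mul_le_mul ih (by linarith) (by positivity) (by positivity)
      _ = (2 * (n:ℝ)^n) * ((n:ℝ)+1) * 2 := by ring
      _ ≤ ((n:ℝ)+1)^n * ((n:ℝ)+1) * 2 := by
          apply mul_le_mul_of_nonneg_right (mul_le_mul_of_nonneg_right hb (by positivity))
            (by norm_num)
      _ = 2 * ((n+1:ℕ):ℝ)^(n+1) := by push_cast; ring

lemma map_pair {Ω : Type*} [MeasurableSpace Ω] (μ : Measure Ω) [IsProbabilityMeasure μ]
    {m : ℕ} (i j : Fin m) (hij : i ≠ j) :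
    Measure.map (fun x : Fin m → Ω => (x i, x j)) (Measure.pi fun _ => μ) = μ.prod μ := by
  classical
  refine (Measure.prod_eq fun s t hs ht => ?_).symm
  rw [Measure.map_apply ((measurable_pi_apply i).prodMk (measurable_pi_apply j)) (hs.prod ht)]
  have hpre : (fun x : Fin m → Ω => (x i, x j)) ⁻¹' (s ×ˢ t)
      = Set.pi Set.univ (Function.update (Function.update (fun _ : Fin m => Set.univ) i s) j t) := by
    ext x
    simp only [Set.mem_preimage, Set.mem_prod, Set.mem_pi, Set.mem_univ, true_implies]
    constructor
    · rintro ⟨h1, h2⟩ k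
      rcases eq_or_ne k j with rfl | hkj
      · rw [Function.update_self]; exact h2
      rcases eq_or_ne k i with rfl | hki
      · rw [Function.update_of_ne hkj, Function.update_self]; exact h1
      · rw [Function.update_of_ne hkj, Function.update_of_ne hki]; trivial
    · intro h
      refine ⟨?_, ?_⟩
      · have := h i; rwa [Function.update_of_ne hij, Function.update_self] at this
      · have := h j; rwa [Function.update_self] at this
  rw [hpre, Measure.pi_pi]
  set F := Function.update (Function.update (fun _ : Fin m => (Set.univ : Set Ω)) i s) j t with hF
  have hmemi : i ∈ Finset.univ.erase j := Finset.mem_erase.2 ⟨hij, Finset.mem_univ i⟩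
  rw [← Finset.mul_prod_erase Finset.univ (fun k => μ (F k)) (Finset.mem_univ j),
    ← Finset.mul_prod_erase _ (fun k => μ (F k)) hmemi]
  have hFj : F j = t := Function.update_self _ _ _
  have hFi : F i = s := by rw [hF, Function.update_of_ne hij, Function.update_self]
  have hrest : ∏ k ∈ (Finset.univ.erase j).erase i, μ (F k) = 1 := by
    refine Finset.prod_eq_one fun k hk => ?_
    have hk1 := Finset.mem_erase.1 hk
    have hk2 := Finset.mem_erase.1 hk1.2
    rw [hF, Function.update_of_ne hk2.1, Function.update_of_ne hk1.1]
    exact measure_univ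
  rw [hFj, hFi, hrest, mul_one, mul_comm]

section
variable {d : ℕ} {μ : Measure (EuclideanSpace ℝ (Fin d))} [IsProbabilityMeasure μ]

lemma pair_prob_le
    (hd : 2 ≤ d)
    (hsphere : μ (Metric.sphere (0 : EuclideanSpace ℝ (Fin d)) 1) = 1)
    (hrot : ∀ R : EuclideanSpace ℝ (Fin d) ≃ₗᵢ[ℝ] EuclideanSpace ℝ (Fin d),
      Measure.map R μ = μ)
    (p : ℕ) (hp : 1 ≤ p) (t : ℝ) (ht : 0 < t) :
    (μ.prod μ) {z : EuclideanSpace ℝ (Fin d) × EuclideanSpace ℝ (Fin d) |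
        t < |(inner ℝ z.1 z.2 : ℝ)|}
      ≤ ENNReal.ofReal ((2 * (p:ℝ)^p / (d:ℝ)^p) / t^(2*p)) := by
  have hd0 : (0:ℝ) < (d:ℝ) := by exact_mod_cast Nat.lt_of_lt_of_le (by norm_num) hd
  set i0 : Fin d := ⟨0, by omega⟩ with hi0
  set i1 : Fin d := ⟨1, by omega⟩ with hi1
  have hi : i0 ≠ i1 := by simp [hi0, hi1, Fin.ext_iff]
  -- the moment bound
  have hA := (moment_le hsphere hrot i0 i1 hi p).trans (prod_odd_le p hp)
  have hAnn : 0 ≤ ∫ x, (x i0)^(2*p) ∂μ := by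
    refine integral_nonneg fun x => ?_
    rw [pow_mul]; positivity
  have hAle : ∫ x, (x i0)^(2*p) ∂μ ≤ 2 * (p:ℝ)^p / (d:ℝ)^p := by
    rw [le_div_iff₀ (by positivity)]
    exact hA
  -- measurability of the event
  have hS : MeasurableSet {z : EuclideanSpace ℝ (Fin d) × EuclideanSpace ℝ (Fin d) |
      t < |(inner ℝ z.1 z.2 : ℝ)|} := by
    have hcont : Continuous fun z : EuclideanSpace ℝ (Fin d) × EuclideanSpace ℝ (Fin d) =>
        |(inner ℝ z.1 z.2 : ℝ)| := continuous_inner.abs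
    exact measurableSet_lt measurable_const hcont.measurable
  rw [Measure.prod_apply hS]
  have hbound : ∀ᵐ a ∂μ, μ (Prod.mk a ⁻¹' {z : EuclideanSpace ℝ (Fin d) ×
      EuclideanSpace ℝ (Fin d) | t < |(inner ℝ z.1 z.2 : ℝ)|})
      ≤ ENNReal.ofReal ((2 * (p:ℝ)^p / (d:ℝ)^p) / t^(2*p)) := by
    filter_upwards [ae_sphere hsphere] with a ha
    -- the reflection sending e_{i0} to a
    set e0 : EuclideanSpace ℝ (Fin d) := EuclideanSpace.single i0 (1:ℝ) with he0
    have hnorm : ‖e0‖ = ‖a‖ := by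
      rw [he0, EuclideanSpace.norm_single, ha]; norm_num
    set R := Submodule.reflection (ℝ ∙ (e0 - a))ᗮ with hR
    have hRe0 : R e0 = a := Submodule.reflection_sub hnorm
    have hkey : ∀ b : EuclideanSpace ℝ (Fin d), (inner ℝ a b : ℝ) = (R.symm b) i0 := by
      intro b
      have h1 : ((R.symm b) i0 : ℝ) = inner ℝ e0 (R.symm b) := by
        rw [he0, EuclideanSpace.inner_single_left]
        simp
      rw [h1, ← LinearIsometryEquiv.inner_map_map R e0 (R.symm b),
        LinearIsometryEquiv.apply_symm_apply, hRe0]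
    -- Markov
    set f : EuclideanSpace ℝ (Fin d) → ℝ≥0∞ := fun b =>
      ENNReal.ofReal ((inner ℝ a b : ℝ)^(2*p)) with hf
    have hinncont : Continuous fun b : EuclideanSpace ℝ (Fin d) => (inner ℝ a b : ℝ) :=
      Continuous.inner continuous_const continuous_id
    have hfm : AEMeasurable f μ := by
      refine (ENNReal.continuous_ofReal.comp (hinncont.pow _)).measurable.aemeasurable
    have hsubset : Prod.mk a ⁻¹' {z : EuclideanSpace ℝ (Fin d) ×
        EuclideanSpace ℝ (Fin d) | t < |(inner ℝ z.1 z.2 : ℝ)|}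
        ⊆ {b | ENNReal.ofReal (t^(2*p)) ≤ f b} := by
      intro b hb
      simp only [Set.mem_preimage, Set.mem_setOf_eq] at hb ⊢
      rw [hf]
      refine ENNReal.ofReal_le_ofReal ?_
      calc t^(2*p) ≤ |(inner ℝ a b : ℝ)|^(2*p) :=
            pow_le_pow_left₀ ht.le hb.le _
        _ = (inner ℝ a b : ℝ)^(2*p) := Even.pow_abs (even_two_mul p) _
    have hmar := meas_ge_le_lintegral_div hfm
      (ε := ENNReal.ofReal (t^(2*p)))
      (by simp [ENNReal.ofReal_eq_zero, not_le]; positivity) ENNReal.ofReal_ne_top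
    -- compute the lintegral
    have hintegrable : Integrable (fun b => (inner ℝ a b : ℝ)^(2*p)) μ := by
      refine integrable_of_sphere_bound hsphere ((hinncont.pow _).aestronglyMeasurable) 1
        (fun x hx => ?_)
      rw [abs_pow]
      refine pow_le_one₀ (abs_nonneg _) ?_
      calc |(inner ℝ a x : ℝ)| ≤ ‖a‖ * ‖x‖ := abs_real_inner_le_norm a x
        _ = 1 := by rw [ha, hx]; norm_num
    have hnnae : 0 ≤ᵐ[μ] fun b => (inner ℝ a b : ℝ)^(2*p) :=
      ae_of_all _ fun b => by
        simp only [Pi.zero_apply]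
        rw [pow_mul]; positivity
    have hlint : ∫⁻ b, f b ∂μ = ENNReal.ofReal (∫ b, (inner ℝ a b : ℝ)^(2*p) ∂μ) :=
      (ofReal_integral_eq_lintegral_ofReal hintegrable hnnae).symm
    -- identify the integral with the moment
    have hmoment : ∫ b, (inner ℝ a b : ℝ)^(2*p) ∂μ = ∫ x, (x i0)^(2*p) ∂μ := by
      have hfc : Continuous fun y : EuclideanSpace ℝ (Fin d) => (y i0)^(2*p) :=
        (PiLp.continuous_apply 2 _ i0).pow _
      have := integral_comp_iso hrot R.symm (fun y => (y i0)^(2*p)) hfc.aestronglyMeasurable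
      rw [← this]
      refine integral_congr_ae (ae_of_all _ fun b => ?_)
      show (inner ℝ a b : ℝ)^(2*p) = ((R.symm b) i0)^(2*p)
      rw [hkey b]
    refine (measure_mono hsubset).trans (hmar.trans ?_)
    rw [hlint, ← ENNReal.ofReal_div_of_pos (by positivity : (0:ℝ) < t^(2*p))]
    refine ENNReal.ofReal_le_ofReal ?_
    rw [hmoment]
    gcongr
  refine le_trans (lintegral_mono_ae hbound) ?_
  rw [lintegral_const, measure_univ, mul_one]
end

/-- for `m ≤ d^k` i.i.d. uniform points on the unit sphere in `ℝ^d`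
(`μ` is the uniform, i.e. rotation-invariant, probability measure on the sphere),
the probability that some pair has inner product larger than `ln(d)/√d` in
absolute value is at most `d^(2k+1-ln(d)/4)`. -/
theorem pairwise_inner_log_small_whp (d : ℕ) (hd : 6 ≤ d) (k : ℝ) (hk : 1 ≤ k)
    (m : ℕ) (hm : 1 ≤ m) (hmd : (m : ℝ) ≤ (d : ℝ) ^ k)
    (μ : Measure (EuclideanSpace ℝ (Fin d))) [IsProbabilityMeasure μ]
    (hsphere : μ (Metric.sphere (0 : EuclideanSpace ℝ (Fin d)) 1) = 1)
    (hrot : ∀ R : EuclideanSpace ℝ (Fin d) ≃ₗᵢ[ℝ] EuclideanSpace ℝ (Fin d),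
      Measure.map R μ = μ) :
    (Measure.pi fun _ : Fin m => μ)
        {x : Fin m → EuclideanSpace ℝ (Fin d) |
          ∃ i j, i ≠ j ∧ Real.log d / Real.sqrt d < |⟪x i, x j⟫_ℝ|} ≤
      ENNReal.ofReal ((d : ℝ) ^ (2 * k + 1 - Real.log d / 4)) := by
  have hd1 : (1:ℝ) < d := by exact_mod_cast (by omega : 1 < d)
  have hd0 : (0:ℝ) < d := lt_trans one_pos hd1
  set L := Real.log (d:ℝ) with hL
  have hL0 : 0 < L := Real.log_pos hd1
  by_cases htriv : 0 ≤ 2*k + 1 - L/4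
  · refine le_trans prob_le_one ?_
    rw [← ENNReal.ofReal_one]
    exact ENNReal.ofReal_le_ofReal (Real.one_le_rpow hd1.le htriv)
  push_neg at htriv
  have hL12 : 12 < L := by nlinarith
  set t := L / Real.sqrt (d:ℝ) with ht_def
  have ht : 0 < t := div_pos hL0 (Real.sqrt_pos.2 hd0)
  set p := ⌈L^2/3⌉₊ with hp_def
  have hp1 : 1 ≤ p := Nat.one_le_ceil_iff.2 (by positivity)
  have hpge : L^2/3 ≤ (p:ℝ) := Nat.le_ceil _
  have hple : (p:ℝ) ≤ L^2/3 + 1 := le_of_lt (Nat.ceil_lt_add_one (by positivity))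
  -- the events
  set Sset := {z : EuclideanSpace ℝ (Fin d) × EuclideanSpace ℝ (Fin d) |
    t < |(inner ℝ z.1 z.2 : ℝ)|} with hSset
  have hS : MeasurableSet Sset :=
    measurableSet_lt measurable_const continuous_inner.abs.measurable
  set P : Fin m × Fin m → Set (Fin m → EuclideanSpace ℝ (Fin d)) := fun q =>
    {x | q.1 ≠ q.2 ∧ t < |(inner ℝ (x q.1) (x q.2) : ℝ)|} with hP
  have hsub : {x : Fin m → EuclideanSpace ℝ (Fin d) |
      ∃ i j, i ≠ j ∧ t < |(inner ℝ (x i) (x j) : ℝ)|} ⊆ ⋃ q, P q := by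
    rintro x ⟨i, j, hij, hx⟩
    exact Set.mem_iUnion.2 ⟨(i, j), hij, hx⟩
  set Cap := ENNReal.ofReal ((2 * (p:ℝ)^p / (d:ℝ)^p) / t^(2*p)) with hCap
  have hPbound : ∀ q : Fin m × Fin m, (Measure.pi fun _ : Fin m => μ) (P q) ≤ Cap := by
    intro q
    rcases eq_or_ne q.1 q.2 with heq | hne
    · have hPe : P q = ∅ := by ext x; simp [hP, heq]
      rw [hPe]; simp
    · have hPq : P q = (fun x => (x q.1, x q.2)) ⁻¹' Sset := by
        ext x; simp [hP, hSset, hne]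
      have hmap : (Measure.pi fun _ : Fin m => μ) ((fun x => (x q.1, x q.2)) ⁻¹' Sset)
          = (μ.prod μ) Sset := by
        rw [← map_pair μ q.1 q.2 hne]
        exact (Measure.map_apply
          (show Measurable fun x : Fin m → EuclideanSpace ℝ (Fin d) => (x q.1, x q.2) from
            (measurable_pi_apply q.1).prodMk (measurable_pi_apply q.2)) hS).symm
      rw [hPq, hmap]
      exact pair_prob_le (by omega) hsphere hrot p hp1 t ht
  refine le_trans (measure_mono hsub) ?_
  refine le_trans (measure_iUnion_le _) ?_
  rw [tsum_fintype]
  refine le_trans (Finset.sum_le_sum fun q _ => hPbound q) ?_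
  rw [Finset.sum_const, Finset.card_univ, Fintype.card_prod, Fintype.card_fin, nsmul_eq_mul]
  have hcast : ((m*m : ℕ) : ENNReal) = ENNReal.ofReal ((m:ℝ)*(m:ℝ)) := by
    rw [← ENNReal.ofReal_natCast]; push_cast; ring_nf
  rw [hCap, hcast, ← ENNReal.ofReal_mul (by positivity)]
  refine ENNReal.ofReal_le_ofReal ?_
  -- now a purely real inequality
  have hsq : Real.sqrt (d:ℝ) ^ (2*p) = (d:ℝ)^p := by
    rw [pow_mul, Real.sq_sqrt hd0.le]
  have ht2 : t^(2*p) = L^(2*p) / (d:ℝ)^p := by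
    rw [ht_def, div_pow, hsq]
  have hcap : (2 * (p:ℝ)^p / (d:ℝ)^p) / t^(2*p) = 2 * ((p:ℝ)/L^2)^p := by
    rw [ht2, div_pow, ← pow_mul]
    have hLp : L^(2*p) ≠ 0 := by positivity
    have hdp : (d:ℝ)^p ≠ 0 := by positivity
    field_simp
  rw [hcap]
  -- exponential bounds
  have hplL : (p:ℝ)/L^2 ≤ Real.exp (-(3/4)) := by
    have h144 : (1:ℝ)/L^2 ≤ 1/144 := by
      rw [div_le_div_iff₀ (by positivity) (by norm_num)]
      nlinarith
    have hp2 : (p:ℝ)/L^2 ≤ 1/3 + 1/L^2 := by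
      rw [div_le_iff₀ (by positivity : (0:ℝ) < L^2)] at *
      calc (p:ℝ) ≤ L^2/3 + 1 := hple
        _ = (1/3) * L^2 + 1 := by ring
        _ ≤ (1/3 + 1/L^2) * L^2 := by
            have : (1/L^2) * L^2 = 1 := by field_simp
            nlinarith [this]
    have hexp : (1:ℝ)/3 + 1/144 ≤ Real.exp (-(3/4)) := by
      have he1 : Real.exp (3/4) < 2.7182818286 :=
        lt_of_le_of_lt (Real.exp_le_exp.2 (by norm_num)) Real.exp_one_lt_d9
      have hpos : (0:ℝ) < Real.exp (3/4) := Real.exp_pos _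
      rw [Real.exp_neg]
      rw [le_inv_comm₀ (by norm_num) hpos]
      exact le_of_lt (lt_of_lt_of_le he1 (by norm_num))
    calc (p:ℝ)/L^2 ≤ 1/3 + 1/L^2 := hp2
      _ ≤ 1/3 + 1/144 := by linarith
      _ ≤ Real.exp (-(3/4)) := hexp
  have hpow : ((p:ℝ)/L^2)^p ≤ Real.exp (-(L^2)/4) := by
    calc ((p:ℝ)/L^2)^p ≤ (Real.exp (-(3/4)))^p :=
          pow_le_pow_left₀ (by positivity) hplL p
      _ = Real.exp ((p:ℝ) * (-(3/4))) := by rw [← Real.exp_nat_mul]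
      _ ≤ Real.exp (-(L^2)/4) := by
          apply Real.exp_le_exp.2
          nlinarith
  have h2exp : (2:ℝ) ≤ Real.exp L := by
    have := Real.add_one_le_exp L
    linarith
  have hmexp : (m:ℝ) ≤ Real.exp (k*L) := by
    refine hmd.trans (le_of_eq ?_)
    rw [Real.rpow_def_of_pos hd0, ← hL, mul_comm]
  have hm0 : (0:ℝ) ≤ m := Nat.cast_nonneg m
  calc (m:ℝ) * (m:ℝ) * (2 * ((p:ℝ)/L^2)^p)
      ≤ Real.exp (k*L) * Real.exp (k*L) * (Real.exp L * Real.exp (-(L^2)/4)) := by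
        refine mul_le_mul (mul_le_mul hmexp hmexp hm0 (Real.exp_nonneg _)) ?_
          (by positivity) (by positivity)
        exact mul_le_mul h2exp hpow (by positivity) (Real.exp_nonneg _)
    _ = Real.exp (k*L + k*L + (L + -(L^2)/4)) := by
        rw [Real.exp_add, Real.exp_add, Real.exp_add]
    _ = (d:ℝ) ^ (2 * k + 1 - L/4) := by
        rw [Real.rpow_def_of_pos hd0, ← hL]
        congr 1
        ring
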